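/- arXiv:1804.07385 — 4 statements merged into one kernel-verified Lean document; each statement's English description precedes it below -/
import Mathlib

section
/- If T is a contraction on a Hilbert space H (i.e., ‖T‖ ≤ 1) and λ is a complex number with |λ| < 1, then the operator b_λ(T) = (T - λI)(I - conj(λ)T)⁻¹ is well-defined (I - conj(λ)T is invertible) and is itself a contraction. -/
open scoped InnerProductSpace ComplexConjugate
open ContinuousLinearMap

/-- The Möbius transform `b_λ(T) = (T - λI)(I - conj(λ)T)⁻¹` of an operator `T`,
defined using `Ring.inverse` (which yields the genuine inverse when `I - conj(λ)T`
is invertible). -/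
noncomputable def blam {H : Type*} [NormedAddCommGroup H] [InnerProductSpace ℂ H]
    [CompleteSpace H] (T : H →L[ℂ] H) (l : ℂ) : H →L[ℂ] H :=
  (T - l • (1 : H →L[ℂ] H)) * Ring.inverse ((1 : H →L[ℂ] H) - conj l • T)

lemma blam_key {H : Type*} [NormedAddCommGroup H] [InnerProductSpace ℂ H]
    [CompleteSpace H] (T : H →L[ℂ] H) (hT : ‖T‖ ≤ 1) (l : ℂ) (hl : ‖l‖ < 1)
    (u : H) : ‖(T - l • (1 : H →L[ℂ] H)) u‖ ≤ ‖((1 : H →L[ℂ] H) - conj l • T) u‖ := by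
  have hTu : ‖T u‖ ≤ ‖u‖ := by
    calc ‖T u‖ ≤ ‖T‖ * ‖u‖ := T.le_opNorm u
    _ ≤ 1 * ‖u‖ := by gcongr
    _ = ‖u‖ := one_mul _
  have h1 : (T - l • (1 : H →L[ℂ] H)) u = T u - l • u := by simp
  have h2 : ((1 : H →L[ℂ] H) - conj l • T) u = u - conj l • T u := by simp
  rw [h1, h2]
  have e1 : ‖T u - l • u‖ ^ 2
      = ‖T u‖ ^ 2 - 2 * Complex.re (l * ⟪T u, u⟫_ℂ) + ‖l‖ ^ 2 * ‖u‖ ^ 2 := by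
    rw [@norm_sub_sq ℂ, inner_smul_right, norm_smul, mul_pow]
    norm_num
  have e2 : ‖u - conj l • T u‖ ^ 2
      = ‖u‖ ^ 2 - 2 * Complex.re (l * ⟪T u, u⟫_ℂ) + ‖l‖ ^ 2 * ‖T u‖ ^ 2 := by
    rw [@norm_sub_sq ℂ, inner_smul_right, norm_smul, mul_pow]
    have : Complex.re (conj l * ⟪u, T u⟫_ℂ) = Complex.re (l * ⟪T u, u⟫_ℂ) := by
      rw [← inner_conj_symm u (T u), ← map_mul, Complex.conj_re]
    simp only [RCLike.re_to_complex]
    rw [this]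
    norm_num
  have hl2 : ‖l‖ ^ 2 ≤ 1 := by nlinarith [norm_nonneg l]
  have hTu2 : ‖T u‖ ^ 2 ≤ ‖u‖ ^ 2 := by nlinarith [norm_nonneg (T u)]
  have key : (0:ℝ) ≤ (1 - ‖l‖ ^ 2) * (‖u‖ ^ 2 - ‖T u‖ ^ 2) :=
    mul_nonneg (by linarith) (by linarith)
  have hsq : ‖T u - l • u‖ ^ 2 ≤ ‖u - conj l • T u‖ ^ 2 := by
    rw [e1, e2]; nlinarith [key]
  nlinarith [norm_nonneg (T u - l • u), norm_nonneg (u - conj l • T u), hsq]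

/-- If `T` is a contraction on a complex Hilbert space and `|λ| < 1`, then
`I - conj(λ)T` is invertible (so `b_λ(T)` is well-defined) and `b_λ(T)` is a
contraction. -/
theorem blam_wellDefined_and_contraction {H : Type*} [NormedAddCommGroup H]
    [InnerProductSpace ℂ H] [CompleteSpace H] (T : H →L[ℂ] H) (hT : ‖T‖ ≤ 1)
    (l : ℂ) (hl : ‖l‖ < 1) :
    IsUnit ((1 : H →L[ℂ] H) - conj l • T) ∧ ‖blam T l‖ ≤ 1 := by
  have hsm : ‖conj l • T‖ < 1 := by
    calc ‖conj l • T‖ = ‖conj l‖ * ‖T‖ := norm_smul _ _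
    _ ≤ ‖l‖ * 1 := by rw [RCLike.norm_conj]; gcongr
    _ = ‖l‖ := mul_one _
    _ < 1 := hl
  have hunit : IsUnit ((1 : H →L[ℂ] H) - conj l • T) := by
    simpa using (Units.oneSub (conj l • T) hsm).isUnit
  refine ⟨hunit, ?_⟩
  apply opNorm_le_bound _ zero_le_one
  intro x
  rw [one_mul]
  set u := Ring.inverse ((1 : H →L[ℂ] H) - conj l • T) x with hu
  have hmul : ((1 : H →L[ℂ] H) - conj l • T) * Ring.inverse ((1 : H →L[ℂ] H) - conj l • T) = 1 :=
    Ring.mul_inverse_cancel _ hunit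
  have hux : ((1 : H →L[ℂ] H) - conj l • T) u = x := by
    have := congrArg (fun A : H →L[ℂ] H => A x) hmul
    simpa [mul_apply, hu] using this
  have hb : blam T l x = (T - l • (1 : H →L[ℂ] H)) u := by
    simp [blam, mul_apply, hu]
  rw [hb, ← hux]
  exact blam_key T hT l hl u
end

section
/- For any contraction T on a Hilbert space, the equality trace(I - T*T) + dim ker T* = trace(I - T T*) + dim ker T holds (as an identity of extended nonnegative reals). -/
open scoped InnerProductSpace ENNReal
open ContinuousLinearMap

namespace TraceDefectAux

variable {H : Type*} [NormedAddCommGroup H] [InnerProductSpace ℂ H] [CompleteSpace H]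

lemma re_inner_self (y : H) : (⟪y, y⟫_ℂ).re = ‖y‖^2 := by
  rw [← inner_self_eq_norm_sq (𝕜 := ℂ)]
  rfl

lemma inner_sa_move {S : H →L[ℂ] H} (hS : IsSelfAdjoint S) (x y : H) :
    ⟪S x, y⟫_ℂ = ⟪x, S y⟫_ℂ := by
  have := (isSelfAdjoint_iff_isSymmetric.mp hS) x y
  exact this

lemma parseval {ι : Type*} (e : HilbertBasis ι ℂ H) (x : H) :
    ∑' i, ENNReal.ofReal (‖⟪x, e i⟫_ℂ‖^2) = ENNReal.ofReal (‖x‖^2) := by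
  have h := e.hasSum_inner_mul_inner x x
  have hxx : ⟪x, x⟫_ℂ = ((‖x‖^2 : ℝ) : ℂ) := by
    rw [inner_self_eq_norm_sq_to_K]; push_cast; norm_cast
  have h2i : ∀ i, ⟪x, e i⟫_ℂ * ⟪e i, x⟫_ℂ = ((‖⟪x, e i⟫_ℂ‖^2 : ℝ) : ℂ) := by
    intro i
    rw [← inner_conj_symm x (e i), mul_comm, Complex.mul_conj]
    norm_cast
    rw [Complex.normSq_eq_norm_sq, Complex.norm_conj]
  rw [hxx] at h
  have h3 : HasSum (fun i => (‖⟪x, e i⟫_ℂ‖^2 : ℝ)) (‖x‖^2) := by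
    rw [← Complex.hasSum_ofReal]
    exact HasSum.congr_fun h (fun i => (h2i i).symm)
  rw [← h3.tsum_eq]
  exact (ENNReal.ofReal_tsum_of_nonneg (fun i => sq_nonneg _) h3.summable).symm

lemma hs_symm {ι : Type*} (e : HilbertBasis ι ℂ H) (X : H →L[ℂ] H) :
    ∑' i, ENNReal.ofReal (‖X (e i)‖^2) = ∑' i, ENNReal.ofReal (‖(star X) (e i)‖^2) := by
  have key : ∀ (i j : ι), ‖⟪X (e i), e j⟫_ℂ‖ = ‖⟪(star X) (e j), e i⟫_ℂ‖ := by
    intro i j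
    rw [star_eq_adjoint, ← adjoint_inner_right]
    exact norm_inner_symm _ _
  calc ∑' i, ENNReal.ofReal (‖X (e i)‖^2)
      = ∑' i, ∑' j, ENNReal.ofReal (‖⟪X (e i), e j⟫_ℂ‖^2) := by
        refine tsum_congr fun i => ?_
        exact (parseval e (X (e i))).symm
    _ = ∑' j, ∑' i, ENNReal.ofReal (‖⟪(star X) (e j), e i⟫_ℂ‖^2) := by
        rw [ENNReal.tsum_comm]
        exact tsum_congr fun j => tsum_congr fun i => by rw [key i j]
    _ = ∑' j, ENNReal.ofReal (‖(star X) (e j)‖^2) := by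
        refine tsum_congr fun j => parseval e _

/-- defect operator `1 - T*T` -/
noncomputable def opA (T : H →L[ℂ] H) : H →L[ℂ] H := 1 - star T * T

lemma opA_sa (T : H →L[ℂ] H) : IsSelfAdjoint (opA T) := by
  show star _ = _
  simp [opA, star_sub, star_mul]

lemma inner_u (T : H →L[ℂ] H) (x y : H) : ⟪(star T * T) x, y⟫_ℂ = ⟪T x, T y⟫_ℂ := by
  rw [ContinuousLinearMap.mul_apply, star_eq_adjoint, adjoint_inner_left]

lemma normT_apply {T : H →L[ℂ] H} (hT : ‖T‖ ≤ 1) (x : H) : ‖T x‖ ≤ ‖x‖ := by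
  simpa using T.le_of_opNorm_le hT x

lemma normTs_apply {T : H →L[ℂ] H} (hT : ‖T‖ ≤ 1) (x : H) : ‖(star T) x‖ ≤ ‖x‖ := by
  have h : ‖star T‖ ≤ 1 := by rw [norm_star]; exact hT
  simpa using (star T).le_of_opNorm_le h x

lemma inner_opA (T : H →L[ℂ] H) (y : H) : (⟪opA T y, y⟫_ℂ).re = ‖y‖^2 - ‖T y‖^2 := by
  have : opA T y = y - (star T * T) y := by simp [opA, sub_apply]
  rw [this, inner_sub_left, Complex.sub_re, inner_u, re_inner_self, re_inner_self]

lemma opA_nonneg {T : H →L[ℂ] H} (hT : ‖T‖ ≤ 1) : 0 ≤ opA T := by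
  rw [ContinuousLinearMap.nonneg_iff_isPositive]
  refine ⟨(opA_sa T).isSymmetric, fun x => ?_⟩
  show (0:ℝ) ≤ RCLike.re _
  rw [RCLike.re_to_complex, inner_opA]
  have := normT_apply hT x
  nlinarith [norm_nonneg (T x), norm_nonneg x]

lemma opA_le_one {T : H →L[ℂ] H} (hT : ‖T‖ ≤ 1) : opA T ≤ 1 := by
  rw [ContinuousLinearMap.le_def]
  have h1 : (1 : H →L[ℂ] H) - opA T = star T * T := by
    simp [opA]
  rw [h1]
  refine ⟨(IsSelfAdjoint.star_mul_self T).isSymmetric, fun x => ?_⟩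
  show (0:ℝ) ≤ RCLike.re _
  rw [RCLike.re_to_complex, inner_u, re_inner_self]
  positivity

lemma opA_norm_le {T : H →L[ℂ] H} (hT : ‖T‖ ≤ 1) : ‖opA T‖ ≤ 1 :=
  (CStarAlgebra.norm_le_one_iff_of_nonneg _ (opA_nonneg hT)).mpr (opA_le_one hT)

lemma opA_pow_apply_le {T : H →L[ℂ] H} (hT : ‖T‖ ≤ 1) (n : ℕ) (x : H) :
    ‖((opA T)^n) x‖ ≤ ‖x‖ := by
  induction n with
  | zero => simp
  | succ n ih =>
    have : ((opA T)^(n+1)) x = opA T (((opA T)^n) x) := by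
      rw [pow_succ', ContinuousLinearMap.mul_apply]
    rw [this]
    calc ‖opA T (((opA T)^n) x)‖ ≤ 1 * ‖((opA T)^n) x‖ :=
          (opA T).le_of_opNorm_le (opA_norm_le hT) _
    _ ≤ ‖x‖ := by simpa using ih


lemma opA_sub_sq (T : H →L[ℂ] H) :
    opA T - opA T * opA T = star T * ((1 - T * star T) * T) := by
  unfold opA; noncomm_ring

lemma inner_Tz (T : H →L[ℂ] H) (z y : H) : ⟪T z, y⟫_ℂ = ⟪z, (star T) y⟫_ℂ := by
  nth_rewrite 1 [show T = adjoint (star T) by rw [← star_eq_adjoint, star_star]]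
  rw [adjoint_inner_left]

lemma inner_opB_nonneg {T : H →L[ℂ] H} (hT : ‖T‖ ≤ 1) (y : H) :
    0 ≤ (⟪((1 : H →L[ℂ] H) - T * star T) y, y⟫_ℂ).re := by
  have h1 : ((1 : H →L[ℂ] H) - T * star T) y = y - T ((star T) y) := by
    simp [sub_apply]
  rw [h1, inner_sub_left, Complex.sub_re, re_inner_self]
  have h2 : ⟪T ((star T) y), y⟫_ℂ = ⟪(star T) y, (star T) y⟫_ℂ := inner_Tz T _ y
  rw [h2, re_inner_self]
  have := normTs_apply hT y
  nlinarith [norm_nonneg ((star T) y), norm_nonneg y]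

lemma sa_pow_move (T : H →L[ℂ] H) (k : ℕ) (x y : H) :
    ⟪((opA T)^k) x, y⟫_ℂ = ⟪x, ((opA T)^k) y⟫_ℂ :=
  inner_sa_move ((opA_sa T).pow k) x y

lemma pow_even_apply (T : H →L[ℂ] H) (k : ℕ) (x : H) :
    ((opA T)^(k+k)) x = ((opA T)^k) (((opA T)^k) x) := by
  rw [pow_add, ContinuousLinearMap.mul_apply]

lemma inner_pow_even (T : H →L[ℂ] H) (k : ℕ) (x : H) :
    (⟪((opA T)^(k+k)) x, x⟫_ℂ).re = ‖((opA T)^k) x‖^2 := by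
  rw [pow_even_apply, sa_pow_move, re_inner_self]

lemma inner_pow_odd (T : H →L[ℂ] H) (k : ℕ) (x : H) :
    (⟪((opA T)^(k+k+1)) x, x⟫_ℂ).re
      = (⟪opA T (((opA T)^k) x), ((opA T)^k) x⟫_ℂ).re := by
  have h : (opA T)^(k+k+1) = (opA T)^k * (opA T * (opA T)^k) := by
    rw [← pow_succ', ← pow_add]; ring_nf
  rw [h, ContinuousLinearMap.mul_apply, sa_pow_move, ContinuousLinearMap.mul_apply]

lemma c_nonneg {T : H →L[ℂ] H} (hT : ‖T‖ ≤ 1) (n : ℕ) (x : H) :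
    0 ≤ (⟪((opA T)^n) x, x⟫_ℂ).re := by
  rcases Nat.even_or_odd n with ⟨k, hk⟩ | ⟨k, hk⟩
  · subst hk; rw [inner_pow_even]; positivity
  · have hk' : n = k + k + 1 := by omega
    subst hk'
    rw [inner_pow_odd, inner_opA]
    have := normT_apply hT (((opA T)^k) x)
    nlinarith [norm_nonneg (T (((opA T)^k) x)), norm_nonneg (((opA T)^k) x)]

lemma c_antitone {T : H →L[ℂ] H} (hT : ‖T‖ ≤ 1) (x : H) :
    Antitone (fun n => (⟪((opA T)^n) x, x⟫_ℂ).re) := by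
  refine antitone_nat_of_succ_le fun n => ?_
  rcases Nat.even_or_odd n with ⟨k, hk⟩ | ⟨k, hk⟩
  · subst hk
    rw [inner_pow_even]
    have h1 : (⟪((opA T)^(k+k+1)) x, x⟫_ℂ).re
        = ‖((opA T)^k) x‖^2 - ‖T (((opA T)^k) x)‖^2 := by
      rw [inner_pow_odd, inner_opA]
    rw [h1]
    nlinarith [norm_nonneg (T (((opA T)^k) x))]
  · have hk' : n = k + k + 1 := by omega
    subst hk'
    have ho : (opA T)^(k+k+1) - (opA T)^(k+k+1+1)
        = (opA T)^k * ((opA T - opA T * opA T) * (opA T)^k) := by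
      have e1 : (opA T)^(k+k+1) = (opA T)^k * (opA T * (opA T)^k) := by
        rw [← pow_succ', ← pow_add]; ring_nf
      have e2 : (opA T)^(k+k+1+1) = (opA T)^k * (opA T * opA T * (opA T)^k) := by
        rw [show k+k+1+1 = k + (1 + (1 + k)) by ring, pow_add, pow_add, pow_add,
          pow_one, mul_assoc]
      rw [e1, e2, ← mul_sub, sub_mul]
    have happ := congrArg (fun (S : H →L[ℂ] H) => (⟪S x, x⟫_ℂ).re) ho
    simp only [sub_apply, inner_sub_left, Complex.sub_re] at happ
    have h2 : (⟪((opA T)^k * ((opA T - opA T * opA T) * (opA T)^k)) x, x⟫_ℂ).re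
        = (⟪((1 : H →L[ℂ] H) - T * star T) (T (((opA T)^k) x)), T (((opA T)^k) x)⟫_ℂ).re := by
      rw [ContinuousLinearMap.mul_apply, sa_pow_move, ContinuousLinearMap.mul_apply,
        opA_sub_sq, ContinuousLinearMap.mul_apply, ContinuousLinearMap.mul_apply,
        star_eq_adjoint, adjoint_inner_left]
    have h3 := inner_opB_nonneg hT (T (((opA T)^k) x))
    rw [h2] at happ
    linarith

lemma c_shift (T : H →L[ℂ] H) (n : ℕ) (z : H) :
    (⟪((opA T)^n) ((star T * T) z), (star T * T) z⟫_ℂ).re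
      = (⟪((opA T)^n) z, z⟫_ℂ).re - (⟪((opA T)^(n+1)) z, z⟫_ℂ).re
        - ((⟪((opA T)^(n+1)) z, z⟫_ℂ).re - (⟪((opA T)^(n+2)) z, z⟫_ℂ).re) := by
  have hu : star T * T = 1 - opA T := by simp [opA]
  have hop : (1 - opA T) * ((opA T)^n * (1 - opA T))
      = (opA T)^n - (opA T)^(n+1) - ((opA T)^(n+1) - (opA T)^(n+2)) := by
    have e1 : ((opA T)^n * (1 - opA T)) = (opA T)^n - (opA T)^(n+1) := by
      rw [mul_sub, mul_one, ← pow_succ]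
    rw [e1, sub_mul, one_mul]
    have e2 : opA T * ((opA T)^n - (opA T)^(n+1)) = (opA T)^(n+1) - (opA T)^(n+2) := by
      rw [mul_sub, ← pow_succ', ← pow_succ']
    rw [e2]
  have hsa : IsSelfAdjoint ((1 : H →L[ℂ] H) - opA T) := by
    rw [← hu]; show star _ = _; simp [star_mul]
  calc (⟪((opA T)^n) ((star T * T) z), (star T * T) z⟫_ℂ).re
      = (⟪((1 - opA T) * ((opA T)^n * (1 - opA T))) z, z⟫_ℂ).re := by
        rw [hu, ContinuousLinearMap.mul_apply, ContinuousLinearMap.mul_apply,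
          ← inner_sa_move hsa]
    _ = _ := by
        rw [hop]
        simp only [sub_apply, inner_sub_left, Complex.sub_re]


lemma opA_pow_ker {T : H →L[ℂ] H} {q : H} (hq : T q = 0) (n : ℕ) :
    ((opA T)^n) q = q := by
  induction n with
  | zero => simp
  | succ n ih =>
    rw [pow_succ, ContinuousLinearMap.mul_apply]
    have : opA T q = q := by
      simp [opA, sub_apply, ContinuousLinearMap.mul_apply, hq]
    rw [this, ih]

lemma c_diff_bound {T : H →L[ℂ] H} (hT : ‖T‖ ≤ 1) (n : ℕ) (y w : H) :
    |(⟪((opA T)^n) y, y⟫_ℂ).re - (⟪((opA T)^n) w, w⟫_ℂ).re|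
      ≤ ‖y - w‖ * ‖y‖ + ‖w‖ * ‖y - w‖ := by
  have hsplit : ⟪((opA T)^n) y, y⟫_ℂ - ⟪((opA T)^n) w, w⟫_ℂ
      = ⟪((opA T)^n) (y - w), y⟫_ℂ + ⟪((opA T)^n) w, y - w⟫_ℂ := by
    rw [map_sub, inner_sub_left, inner_sub_right]
    ring
  have h1 : (⟪((opA T)^n) y, y⟫_ℂ).re - (⟪((opA T)^n) w, w⟫_ℂ).re
      = (⟪((opA T)^n) (y - w), y⟫_ℂ + ⟪((opA T)^n) w, y - w⟫_ℂ).re := by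
    rw [← hsplit, Complex.sub_re]
  rw [h1]
  calc |(⟪((opA T)^n) (y - w), y⟫_ℂ + ⟪((opA T)^n) w, y - w⟫_ℂ).re|
      ≤ ‖⟪((opA T)^n) (y - w), y⟫_ℂ + ⟪((opA T)^n) w, y - w⟫_ℂ‖ := by
        exact Complex.abs_re_le_norm _
    _ ≤ ‖⟪((opA T)^n) (y - w), y⟫_ℂ‖ + ‖⟪((opA T)^n) w, y - w⟫_ℂ‖ := norm_add_le _ _
    _ ≤ ‖y - w‖ * ‖y‖ + ‖w‖ * ‖y - w‖ := by
        gcongr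
        · calc ‖⟪((opA T)^n) (y - w), y⟫_ℂ‖ ≤ ‖((opA T)^n) (y - w)‖ * ‖y‖ :=
            norm_inner_le_norm _ _
          _ ≤ ‖y - w‖ * ‖y‖ := by
            gcongr; exact opA_pow_apply_le hT n _
        · calc ‖⟪((opA T)^n) w, y - w⟫_ℂ‖ ≤ ‖((opA T)^n) w‖ * ‖y - w‖ :=
            norm_inner_le_norm _ _
          _ ≤ ‖w‖ * ‖y - w‖ := by
            gcongr; exact opA_pow_apply_le hT n _

lemma tendsto_c_orth {T : H →L[ℂ] H} (hT : ‖T‖ ≤ 1) (y : H)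
    (hy : y ∈ (LinearMap.ker (T : H →ₗ[ℂ] H))ᗮ) :
    Filter.Tendsto (fun n => (⟪((opA T)^n) y, y⟫_ℂ).re) Filter.atTop (nhds 0) := by
  have hbdd : BddBelow (Set.range fun n => (⟪((opA T)^n) y, y⟫_ℂ).re) := by
    refine ⟨0, ?_⟩
    rintro r ⟨n, rfl⟩
    exact c_nonneg hT n y
  have htend := tendsto_atTop_ciInf (c_antitone hT y) hbdd
  have h0 : (⨅ n, (⟪((opA T)^n) y, y⟫_ℂ).re) = 0 := by
    refine le_antisymm ?_ (le_ciInf fun n => c_nonneg hT n y)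
    refine le_of_forall_pos_le_add fun ε hε => ?_
    rw [zero_add]
    -- density of range (star T * T) in (ker T)ᗮ
    have horth : (LinearMap.range (((star T * T) : H →L[ℂ] H) : H →ₗ[ℂ] H))ᗮ ≤ LinearMap.ker (T : H →ₗ[ℂ] H) := by
      intro z hz
      have h1 : ⟪(star T * T) z, z⟫_ℂ = 0 :=
        Submodule.inner_right_of_mem_orthogonal (LinearMap.mem_range_self _ z) hz
      rw [inner_u, inner_self_eq_zero] at h1
      exact LinearMap.mem_ker.mpr h1
    have hker : (LinearMap.ker (T : H →ₗ[ℂ] H))ᗮ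
        ≤ (LinearMap.range (((star T * T) : H →L[ℂ] H) : H →ₗ[ℂ] H)).topologicalClosure := by
      rw [← Submodule.orthogonal_orthogonal_eq_closure]
      exact Submodule.orthogonal_le horth
    have hyc : y ∈ closure ((LinearMap.range (((star T * T) : H →L[ℂ] H) : H →ₗ[ℂ] H)) : Set H) :=
      hker hy
    -- choose approximant
    have hden : (0:ℝ) < 2 * ‖y‖ + 2 := by positivity
    set δ : ℝ := min 1 (ε / 2 / (2 * ‖y‖ + 2)) with hδdef
    have hδpos : 0 < δ := lt_min one_pos (by positivity)
    obtain ⟨w, hw_mem, hw_dist⟩ := Metric.mem_closure_iff.mp hyc δ hδpos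
    obtain ⟨z, rfl⟩ := hw_mem
    set w := (star T * T) z with hw
    have hdyw : ‖y - w‖ < δ := by rwa [← dist_eq_norm]
    have hδ1 : δ ≤ 1 := min_le_left _ _
    have hδ2 : δ ≤ ε / 2 / (2 * ‖y‖ + 2) := min_le_right _ _
    have hwnorm : ‖w‖ ≤ ‖y‖ + 1 := by
      have := norm_sub_norm_le y w
      have h2 : ‖w‖ - ‖y‖ ≤ ‖y - w‖ := by
        have := abs_norm_sub_norm_le y w
        have := abs_le.mp this
        linarith [this.1]
      linarith
    -- c n w tends to 0
    have hbz : BddBelow (Set.range fun n => (⟪((opA T)^n) z, z⟫_ℂ).re) := by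
      refine ⟨0, ?_⟩
      rintro r ⟨n, rfl⟩
      exact c_nonneg hT n z
    have htz := tendsto_atTop_ciInf (c_antitone hT z) hbz
    have htz1 : Filter.Tendsto (fun n => (⟪((opA T)^(n+1)) z, z⟫_ℂ).re) Filter.atTop
        (nhds (⨅ n, (⟪((opA T)^n) z, z⟫_ℂ).re)) :=
      htz.comp (Filter.tendsto_add_atTop_nat 1)
    have htz2 : Filter.Tendsto (fun n => (⟪((opA T)^(n+2)) z, z⟫_ℂ).re) Filter.atTop
        (nhds (⨅ n, (⟪((opA T)^n) z, z⟫_ℂ).re)) :=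
      htz.comp (Filter.tendsto_add_atTop_nat 2)
    have htw : Filter.Tendsto (fun n => (⟪((opA T)^n) w, w⟫_ℂ).re) Filter.atTop (nhds 0) := by
      have heq : (fun n => (⟪((opA T)^n) w, w⟫_ℂ).re)
          = fun n => (⟪((opA T)^n) z, z⟫_ℂ).re - (⟪((opA T)^(n+1)) z, z⟫_ℂ).re
            - ((⟪((opA T)^(n+1)) z, z⟫_ℂ).re - (⟪((opA T)^(n+2)) z, z⟫_ℂ).re) := by
        funext n; exact c_shift T n z
      rw [heq]
      have := ((htz.sub htz1).sub (htz1.sub htz2))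
      simpa using this
    -- pick N
    have hev : ∀ᶠ n in Filter.atTop, (⟪((opA T)^n) w, w⟫_ℂ).re < ε/2 :=
      htw.eventually_lt_const (by linarith)
    obtain ⟨N, hN⟩ := hev.exists
    have hb := c_diff_bound hT N y w
    have hterm : ‖y - w‖ * ‖y‖ + ‖w‖ * ‖y - w‖ ≤ δ * (2 * ‖y‖ + 2) := by
      have h1 : ‖y - w‖ * ‖y‖ ≤ δ * ‖y‖ :=
        mul_le_mul_of_nonneg_right hdyw.le (norm_nonneg y)
      have h2 : ‖w‖ * ‖y - w‖ ≤ (‖y‖ + 1) * δ :=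
        mul_le_mul hwnorm hdyw.le (norm_nonneg _) (by positivity)
      nlinarith [hδpos.le]
    have hδε : δ * (2 * ‖y‖ + 2) ≤ ε / 2 := by
      have h3 : δ * (2 * ‖y‖ + 2) ≤ (ε / 2 / (2 * ‖y‖ + 2)) * (2 * ‖y‖ + 2) :=
        mul_le_mul_of_nonneg_right hδ2 hden.le
      rwa [div_mul_cancel₀ _ (ne_of_gt hden)] at h3
    calc (⨅ n, (⟪((opA T)^n) y, y⟫_ℂ).re) ≤ (⟪((opA T)^N) y, y⟫_ℂ).re := ciInf_le hbdd N
      _ ≤ (⟪((opA T)^N) w, w⟫_ℂ).re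
          + |(⟪((opA T)^N) y, y⟫_ℂ).re - (⟪((opA T)^N) w, w⟫_ℂ).re| := by
        have := le_abs_self ((⟪((opA T)^N) y, y⟫_ℂ).re - (⟪((opA T)^N) w, w⟫_ℂ).re)
        linarith
      _ ≤ ε/2 + δ * (2 * ‖y‖ + 2) := by
        have := hterm
        linarith
      _ ≤ ε := by linarith
  rwa [h0] at htend


lemma tendsto_c {T : H →L[ℂ] H} (hT : ‖T‖ ≤ 1) (x : H) :
    haveI : CompleteSpace (LinearMap.ker (T : H →ₗ[ℂ] H)) := (ContinuousLinearMap.isClosed_ker T).completeSpace_coe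
    Filter.Tendsto (fun n => (⟪((opA T)^n) x, x⟫_ℂ).re) Filter.atTop
      (nhds (‖((Submodule.orthogonalProjection (LinearMap.ker (T : H →ₗ[ℂ] H)) x : H))‖^2)) := by
  haveI : CompleteSpace (LinearMap.ker (T : H →ₗ[ℂ] H)) := (ContinuousLinearMap.isClosed_ker T).completeSpace_coe
  set K := LinearMap.ker (T : H →ₗ[ℂ] H) with hK
  set q : H := (Submodule.orthogonalProjection K x : H) with hq
  have hqmem : q ∈ K := (Submodule.orthogonalProjection K x).2
  set y : H := x - q with hy
  have hymem : y ∈ Kᗮ := K.sub_starProjection_mem_orthogonal x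
  have hTq : T q = 0 := LinearMap.mem_ker.mp hqmem
  have hdecomp : ∀ n, (⟪((opA T)^n) x, x⟫_ℂ).re = ‖q‖^2 + (⟪((opA T)^n) y, y⟫_ℂ).re := by
    intro n
    have hx : x = q + y := by rw [hy]; abel
    have h1 : ((opA T)^n) x = q + ((opA T)^n) y := by
      rw [hx, map_add, opA_pow_ker hTq]
    rw [h1, hx, inner_add_left, inner_add_right, inner_add_right]
    have e1 : ⟪q, y⟫_ℂ = 0 := Submodule.inner_right_of_mem_orthogonal hqmem hymem
    have e2 : ⟪((opA T)^n) y, q⟫_ℂ = 0 := by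
      rw [sa_pow_move, opA_pow_ker hTq]
      exact Submodule.inner_left_of_mem_orthogonal hqmem hymem
    rw [e1, e2]
    simp [re_inner_self]
    rw [← Complex.ofReal_pow, Complex.ofReal_re]
  have := (tendsto_c_orth hT y hymem).const_add (‖q‖^2)
  simp only [add_zero] at this
  exact Filter.Tendsto.congr (fun n => (hdecomp n).symm) this


lemma telescope {g : ℕ → ℝ} (hg : Antitone g) {l : ℝ} (hl0 : 0 ≤ l)
    (hl : Filter.Tendsto g Filter.atTop (nhds l)) :
    (∑' n : ℕ, ENNReal.ofReal (g (n+1) - g (n+2))) + ENNReal.ofReal l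
      = ENNReal.ofReal (g 1) := by
  have hpart : ∀ N, ∑ k ∈ Finset.range N, ENNReal.ofReal (g (k+1) - g (k+2))
      = ENNReal.ofReal (g 1 - g (N+1)) := by
    intro N
    induction N with
    | zero => simp
    | succ N ih =>
      rw [Finset.sum_range_succ, ih, ← ENNReal.ofReal_add
        (by have := hg (show 1 ≤ N+1 by omega); linarith)
        (by have := hg (show N+1 ≤ N+2 by omega); linarith)]
      ring_nf
  have h1 := ENNReal.tendsto_nat_tsum (fun n => ENNReal.ofReal (g (n+1) - g (n+2)))
  have h1' : Filter.Tendsto (fun N => ENNReal.ofReal (g 1 - g (N+1))) Filter.atTop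
      (nhds (∑' n : ℕ, ENNReal.ofReal (g (n+1) - g (n+2)))) :=
    Filter.Tendsto.congr (fun N => hpart N) h1
  have h2 : Filter.Tendsto (fun N : ℕ => ENNReal.ofReal (g 1 - g (N+1))) Filter.atTop
      (nhds (ENNReal.ofReal (g 1 - l))) := by
    apply ENNReal.tendsto_ofReal
    exact tendsto_const_nhds.sub (hl.comp (Filter.tendsto_add_atTop_nat 1))
  have heq := tendsto_nhds_unique h1' h2
  rw [heq, ← ENNReal.ofReal_add _ hl0]
  · congr 1; ring
  · have hle : l ≤ g 1 := by
      refine le_of_tendsto hl (Filter.eventually_atTop.mpr ⟨1, fun n hn => hg hn⟩)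
    linarith

universe u

lemma tsum_one_hb {E : Type u} [NormedAddCommGroup E] [InnerProductSpace ℂ E]
    [CompleteSpace E] {κ : Type u} (f : HilbertBasis κ ℂ E) :
    ∑' _ : κ, (1:ℝ≥0∞) = (Cardinal.toENat (Module.rank ℂ E) : ℝ≥0∞) := by
  have hli : LinearIndependent ℂ (f : κ → E) := f.orthonormal.linearIndependent
  cases finite_or_infinite κ with
  | inl hfin =>
    haveI := Fintype.ofFinite κ
    haveI : FiniteDimensional ℂ (Submodule.span ℂ (Set.range f)) :=
      FiniteDimensional.span_of_finite ℂ (Set.finite_range f)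
    have hcl : IsClosed ((Submodule.span ℂ (Set.range f)) : Set E) :=
      Submodule.closed_of_finiteDimensional _
    have hsp : Submodule.span ℂ (Set.range ⇑f) = ⊤ := by
      refine le_antisymm le_top ?_
      rw [← f.dense_span]
      exact Submodule.topologicalClosure_minimal _ le_rfl hcl
    let b : Module.Basis κ ℂ E := Module.Basis.mk hli (by rw [hsp])
    have hrank : Module.rank ℂ E = Fintype.card κ := by
      rw [← b.mk_eq_rank'', Cardinal.mk_fintype]
    rw [hrank, tsum_fintype]
    simp
  | inr hinf =>
    rw [ENNReal.tsum_const_eq_top_of_ne_zero one_ne_zero]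
    have h1 : Cardinal.toENat (Module.rank ℂ E) = ⊤ :=
      Cardinal.toENat_eq_top.mpr (le_trans (Cardinal.infinite_iff.mp hinf)
        hli.cardinal_le_rank)
    rw [h1]; rfl

lemma proj_count {ι : Type*} (e : HilbertBasis ι ℂ H) (K : Submodule ℂ H)
    (hKc : IsClosed (K : Set H)) :
    haveI : CompleteSpace K := hKc.completeSpace_coe
    ∑' i, ENNReal.ofReal (‖((Submodule.orthogonalProjection K (e i) : H))‖^2)
      = (Cardinal.toENat (Module.rank ℂ K) : ℝ≥0∞) := by
  haveI : CompleteSpace K := hKc.completeSpace_coe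
  obtain ⟨w, f, hfw⟩ := exists_hilbertBasis ℂ K
  have key : ∀ (x : H) (j : w),
      ⟪Submodule.orthogonalProjection K x, f j⟫_ℂ = ⟪x, ((f j : K) : H)⟫_ℂ := by
    intro x j
    rw [Submodule.coe_inner]
    exact Submodule.inner_orthogonalProjectionOnto_eq_of_mem_right (f j) x
  calc ∑' i, ENNReal.ofReal (‖((Submodule.orthogonalProjection K (e i) : H))‖^2)
      = ∑' (i : ι) (j : w), ENNReal.ofReal (‖⟪((f j : K) : H), e i⟫_ℂ‖^2) := by
        refine tsum_congr fun i => ?_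
        have hp := parseval f (Submodule.orthogonalProjection K (e i))
        have hn : ‖Submodule.orthogonalProjection K (e i)‖ = ‖((Submodule.orthogonalProjection K (e i) : H))‖ := rfl
        rw [hn] at hp
        rw [← hp]
        refine tsum_congr fun j => ?_
        rw [key (e i) j, norm_inner_symm]
    _ = ∑' (j : w) (i : ι), ENNReal.ofReal (‖⟪((f j : K) : H), e i⟫_ℂ‖^2) :=
        ENNReal.tsum_comm
    _ = ∑' (_ : w), (1 : ℝ≥0∞) := by
        refine tsum_congr fun j => ?_
        rw [parseval e]
        have h1 : ‖((f j : K) : H)‖ = 1 := by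
          have := f.orthonormal.1 j
          rw [← this]; rfl
        rw [h1]; simp
    _ = (Cardinal.toENat (Module.rank ℂ K) : ℝ≥0∞) := tsum_one_hb f


lemma trace_split {ι : Type*} (e : HilbertBasis ι ℂ H) {T : H →L[ℂ] H} (hT : ‖T‖ ≤ 1) :
    ∑' i, ENNReal.ofReal ((⟪opA T (e i), e i⟫_ℂ).re)
      = (∑' (n : ℕ) (i : ι),
          ENNReal.ofReal ((⟪((opA T)^(n+1) - (opA T)^(n+2)) (e i), e i⟫_ℂ).re))
        + (Cardinal.toENat (Module.rank ℂ (LinearMap.ker (T : H →ₗ[ℂ] H))) : ℝ≥0∞) := by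
  haveI : CompleteSpace (LinearMap.ker (T : H →ₗ[ℂ] H)) :=
    (ContinuousLinearMap.isClosed_ker T).completeSpace_coe
  have key : ∀ i : ι, ENNReal.ofReal ((⟪opA T (e i), e i⟫_ℂ).re)
      = (∑' n : ℕ, ENNReal.ofReal
          ((⟪((opA T)^(n+1) - (opA T)^(n+2)) (e i), e i⟫_ℂ).re))
        + ENNReal.ofReal (‖((Submodule.orthogonalProjection (LinearMap.ker (T : H →ₗ[ℂ] H)) (e i) : H))‖^2) := by
    intro i
    have ht := telescope (c_antitone hT (e i)) (by positivity) (tendsto_c hT (e i))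
    have h1 : (⟪opA T (e i), e i⟫_ℂ).re = (⟪((opA T)^1) (e i), e i⟫_ℂ).re := by
      rw [pow_one]
    have h2 : ∀ n : ℕ, (⟪((opA T)^(n+1) - (opA T)^(n+2)) (e i), e i⟫_ℂ).re
        = (⟪((opA T)^(n+1)) (e i), e i⟫_ℂ).re - (⟪((opA T)^(n+2)) (e i), e i⟫_ℂ).re := by
      intro n
      rw [sub_apply, inner_sub_left, Complex.sub_re]
    rw [h1, ← ht]
    congr 1
    exact tsum_congr fun n => by rw [h2]
  calc ∑' i, ENNReal.ofReal ((⟪opA T (e i), e i⟫_ℂ).re)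
      = ∑' i, ((∑' n : ℕ, ENNReal.ofReal
          ((⟪((opA T)^(n+1) - (opA T)^(n+2)) (e i), e i⟫_ℂ).re))
        + ENNReal.ofReal (‖((Submodule.orthogonalProjection (LinearMap.ker (T : H →ₗ[ℂ] H)) (e i) : H))‖^2)) :=
        tsum_congr key
    _ = (∑' (i : ι) (n : ℕ), ENNReal.ofReal
          ((⟪((opA T)^(n+1) - (opA T)^(n+2)) (e i), e i⟫_ℂ).re))
        + ∑' i, ENNReal.ofReal (‖((Submodule.orthogonalProjection (LinearMap.ker (T : H →ₗ[ℂ] H)) (e i) : H))‖^2) :=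
        ENNReal.tsum_add
    _ = _ := by
      rw [ENNReal.tsum_comm, proj_count e (LinearMap.ker (T : H →ₗ[ℂ] H))
        (ContinuousLinearMap.isClosed_ker T)]

lemma starT_B_pow (T : H →L[ℂ] H) (k : ℕ) :
    star T * (opA (star T))^k = (opA T)^k * star T := by
  induction k with
  | zero => simp
  | succ k ih =>
    rw [pow_succ, ← mul_assoc, ih, mul_assoc]
    have h1 : star T * opA (star T) = opA T * star T := by
      unfold opA
      rw [star_star]
      noncomm_ring
    rw [h1, pow_succ, mul_assoc]

lemma d_swap {ι : Type*} (e : HilbertBasis ι ℂ H) {T : H →L[ℂ] H} (hT : ‖T‖ ≤ 1) (n : ℕ) :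
    ∑' i, ENNReal.ofReal ((⟪((opA T)^(n+1) - (opA T)^(n+2)) (e i), e i⟫_ℂ).re)
      = ∑' i, ENNReal.ofReal
          ((⟪((opA (star T))^(n+1) - (opA (star T))^(n+2)) (e i), e i⟫_ℂ).re) := by
  obtain ⟨m, hmdef⟩ : ∃ m, m = n + 1 := ⟨n+1, rfl⟩
  rw [show n + 1 = m by omega, show n + 2 = m + 1 by omega]
  have hTs : ‖star T‖ ≤ 1 := by rw [norm_star]; exact hT
  have hB : (0 : H →L[ℂ] H) ≤ opA (star T) := opA_nonneg hTs
  set b : H →L[ℂ] H := CFC.sqrt (opA (star T)) with hbdef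
  have hb : (0 : H →L[ℂ] H) ≤ b := CFC.sqrt_nonneg _
  have hb2 : b * b = opA (star T) := CFC.sqrt_mul_sqrt_self _ hB
  have hbsa : IsSelfAdjoint b := IsSelfAdjoint.of_nonneg hb
  set X : H →L[ℂ] H := b^m * T with hX
  have hbm : b^m * b^m = (opA (star T))^m := by
    rw [← pow_add, ← hb2, show m + m = 2 * m by ring, pow_mul, pow_two]
  have hE1 : star X * X = (opA T)^m - (opA T)^(m+1) := by
    rw [hX, star_mul, star_pow, hbsa.star_eq]
    calc star T * b^m * (b^m * T) = star T * (b^m * b^m) * T := by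
          rw [mul_assoc, mul_assoc, mul_assoc]
      _ = star T * (opA (star T))^m * T := by rw [hbm]
      _ = (opA T)^m * (star T * T) := by rw [starT_B_pow, mul_assoc]
      _ = (opA T)^m * (1 - opA T) := by
          congr 1
          simp [opA]
      _ = (opA T)^m - (opA T)^(m+1) := by rw [mul_sub, mul_one, ← pow_succ]
  have hE2 : X * star X = (opA (star T))^m - (opA (star T))^(m+1) := by
    rw [hX, star_mul, star_pow, hbsa.star_eq]
    calc b^m * T * (star T * b^m) = b^m * (T * star T) * b^m := by
          rw [mul_assoc, mul_assoc, mul_assoc]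
      _ = b^m * (1 - opA (star T)) * b^m := by
          congr 2
          simp [opA, star_star]
      _ = b^m * b^m - b^m * (opA (star T)) * b^m := by
          rw [mul_sub, mul_one, sub_mul]
      _ = (opA (star T))^m - (opA (star T))^(m+1) := by
          rw [hbm]
          congr 1
          have h9 : b^m * (b * b) * b^m = b^(2*(m+1)) := by
            rw [show 2*(m+1) = m + 2 + m by ring, pow_add, pow_add, pow_two]
          rw [← hb2, h9, pow_mul, pow_two]
  have hv1 : ∀ x : H, (⟪((opA T)^m - (opA T)^(m+1)) x, x⟫_ℂ).re = ‖X x‖^2 := by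
    intro x
    rw [← hE1, ContinuousLinearMap.mul_apply, star_eq_adjoint, adjoint_inner_left,
      re_inner_self]
  have hv2 : ∀ x : H,
      (⟪((opA (star T))^m - (opA (star T))^(m+1)) x, x⟫_ℂ).re = ‖(star X) x‖^2 := by
    intro x
    rw [← hE2, ContinuousLinearMap.mul_apply, inner_Tz X, re_inner_self]
  calc ∑' i, ENNReal.ofReal ((⟪((opA T)^m - (opA T)^(m+1)) (e i), e i⟫_ℂ).re)
      = ∑' i, ENNReal.ofReal (‖X (e i)‖^2) := tsum_congr fun i => by rw [hv1]
    _ = ∑' i, ENNReal.ofReal (‖(star X) (e i)‖^2) := hs_symm e X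
    _ = _ := tsum_congr fun i => by rw [hv2]


end TraceDefectAux

open TraceDefectAux in
/-- For any contraction `T` on a Hilbert space, the identity
`trace(I - T*T) + dim ker T* = trace(I - TT*) + dim ker T` holds in `[0, ∞]`,
the traces of the positive operators `I - T*T` and `I - TT*` being computed as
diagonal sums with respect to any Hilbert (orthonormal) basis. -/
theorem trace_defect_identity {H : Type*} [NormedAddCommGroup H]
    [InnerProductSpace ℂ H] [CompleteSpace H] (T : H →L[ℂ] H) (hT : ‖T‖ ≤ 1)
    {ι : Type*} (e : HilbertBasis ι ℂ H) :
    (∑' i, ENNReal.ofReal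
        ((⟪((1 : H →L[ℂ] H) - (adjoint T).comp T) (e i), e i⟫_ℂ).re)) +
      (Cardinal.toENat (Module.rank ℂ (LinearMap.ker ((adjoint T : H →L[ℂ] H) : H →ₗ[ℂ] H))) : ℝ≥0∞) =
    (∑' i, ENNReal.ofReal
        ((⟪((1 : H →L[ℂ] H) - T.comp (adjoint T)) (e i), e i⟫_ℂ).re)) +
      (Cardinal.toENat (Module.rank ℂ (LinearMap.ker (T : H →ₗ[ℂ] H))) : ℝ≥0∞) := by
  have hTs : ‖star T‖ ≤ 1 := by rw [norm_star]; exact hT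
  have e1 : (1 : H →L[ℂ] H) - (adjoint T).comp T = opA T := by
    rw [← ContinuousLinearMap.star_eq_adjoint]; rfl
  have e2 : (1 : H →L[ℂ] H) - T.comp (adjoint T) = opA (star T) := by
    rw [← ContinuousLinearMap.star_eq_adjoint]
    show _ = 1 - star (star T) * star T
    rw [star_star]; rfl
  have e3 : LinearMap.ker ((adjoint T : H →L[ℂ] H) : H →ₗ[ℂ] H) = LinearMap.ker ((star T : H →L[ℂ] H) : H →ₗ[ℂ] H) := by
    rw [← ContinuousLinearMap.star_eq_adjoint]
  rw [e1, e2, e3, trace_split e hT, trace_split e hTs,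
    tsum_congr (fun n => d_swap e hT n)]
  ring
end

section
/- Let T be a contraction of class C_{1·} on a Hilbert space H (i.e., lim_n ‖Tⁿx‖ > 0 for every nonzero x) such that I - T*T is compact. Then T - λI is bounded below (hence left invertible) for every λ in the open unit disk. -/
open ContinuousLinearMap

/-- Let `T` be a contraction of class `C_{1·}` (i.e. `inf_n ‖Tⁿ x‖ > 0` for every
`x ≠ 0`) such that `I - T*T` is compact. Then `T - λI` is bounded below for every
`λ` in the open unit disk. -/
theorem sub_smul_one_bounded_below_of_C1_compact {H : Type*} [NormedAddCommGroup H]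
    [InnerProductSpace ℂ H] [CompleteSpace H] (T : H →L[ℂ] H) (hT : ‖T‖ ≤ 1)
    (hC1 : ∀ x : H, x ≠ 0 → 0 < ⨅ n : ℕ, ‖(T ^ n) x‖)
    (hcpt : IsCompactOperator (⇑((1 : H →L[ℂ] H) - (adjoint T).comp T))) :
    ∀ l : ℂ, ‖l‖ < 1 → ∃ c : ℝ, 0 < c ∧ ∀ x : H, c * ‖x‖ ≤ ‖(T - l • 1) x‖ := by
  intro l hl
  by_contra hc
  push_neg at hc
  -- build a sequence of unit vectors almost annihilated by T - l
  have hseq : ∀ n : ℕ, ∃ u : H, ‖u‖ = 1 ∧ ‖(T - l • 1) u‖ < 1 / (n + 1) := by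
    intro n
    obtain ⟨x, hx⟩ := hc (1 / (n + 1)) (by positivity)
    have hx0 : x ≠ 0 := by
      rintro rfl
      simp at hx
    refine ⟨‖x‖⁻¹ • x, ?_, ?_⟩
    · rw [norm_smul, norm_inv, norm_norm, inv_mul_cancel₀ (norm_ne_zero_iff.mpr hx0)]
    · rw [(T - l • 1).map_smul_of_tower, norm_smul, norm_inv, norm_norm]
      have hxn : (0:ℝ) < ‖x‖ := norm_pos_iff.mpr hx0
      rw [inv_mul_lt_iff₀ hxn]
      linarith [hx]
  choose u hu1 hue using hseq
  set K : H →L[ℂ] H := (1 : H →L[ℂ] H) - (adjoint T).comp T with hK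
  -- the errors tend to zero
  have heps : Filter.Tendsto (fun n => (T - l • 1) (u n)) Filter.atTop (nhds 0) := by
    rw [tendsto_zero_iff_norm_tendsto_zero]
    refine squeeze_zero (fun n => norm_nonneg _) (fun n => le_of_lt (hue n)) ?_
    exact tendsto_one_div_add_atTop_nhds_zero_nat
  -- compactness: extract convergent subsequence of K (u n)
  have hbdd : Bornology.IsBounded (Set.range u) := by
    apply isBounded_iff_forall_norm_le.mpr
    refine ⟨1, ?_⟩
    rintro r ⟨n, rfl⟩
    exact le_of_eq (hu1 n)
  have hcpt' : IsCompactOperator (⇑(K : H →ₗ[ℂ] H)) := hcpt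
  have hKc : IsCompact (closure ((K : H →ₗ[ℂ] H) '' Set.range u)) :=
    hcpt'.isCompact_closure_image_of_bounded hbdd
  have hmem : ∀ n, K (u n) ∈ closure ((K : H →ₗ[ℂ] H) '' Set.range u) := fun n =>
    subset_closure ⟨u n, ⟨n, rfl⟩, rfl⟩
  obtain ⟨y, -, φ, hφ, hyt⟩ := hKc.tendsto_subseq hmem
  -- 1 - l • T* is invertible
  set A : H →L[ℂ] H := l • adjoint T with hA
  have hAn : ‖A‖ < 1 := by
    calc ‖A‖ ≤ ‖l‖ * ‖adjoint T‖ := norm_smul_le _ _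
    _ ≤ ‖l‖ * 1 := by
        apply mul_le_mul_of_nonneg_left _ (norm_nonneg l)
        rw [(adjoint : (H →L[ℂ] H) ≃ₗᵢ⋆[ℂ] (H →L[ℂ] H)).norm_map T]; exact hT
    _ < 1 := by simpa using hl
  set U : (H →L[ℂ] H)ˣ := Units.oneSub A hAn with hU
  -- (1 - A) (u n) = K (u n) + T* ((T - l•1)(u n))
  have key : ∀ n, (U : H →L[ℂ] H) (u n) = K (u n) + adjoint T ((T - l • 1) (u n)) := by
    intro n
    have : (U : H →L[ℂ] H) = 1 - A := rfl
    rw [this]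
    simp only [hK, hA, sub_apply, one_apply, smul_apply, coe_smul', Pi.smul_apply,
      comp_apply, map_sub, map_smul]
    abel
  -- hence (1 - A)(u (φ n)) → y
  have hUy : Filter.Tendsto (fun n => (U : H →L[ℂ] H) (u (φ n))) Filter.atTop (nhds y) := by
    have h2 := ((adjoint T).continuous.tendsto 0).comp (heps.comp hφ.tendsto_atTop)
    rw [map_zero] at h2
    have h3 := hyt.add h2
    rw [add_zero] at h3
    exact h3.congr fun n => (key (φ n)).symm
  -- u (φ n) → x := U⁻¹ y
  set x : H := ((U⁻¹ : (H →L[ℂ] H)ˣ) : H →L[ℂ] H) y with hx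
  have hux : Filter.Tendsto (fun n => u (φ n)) Filter.atTop (nhds x) := by
    have hcont := (((U⁻¹ : (H →L[ℂ] H)ˣ) : H →L[ℂ] H).continuous.tendsto y).comp hUy
    have : (fun n => ((U⁻¹ : (H →L[ℂ] H)ˣ) : H →L[ℂ] H) ((U : H →L[ℂ] H) (u (φ n))))
        = fun n => u (φ n) := by
      funext n
      have : ((U⁻¹ : (H →L[ℂ] H)ˣ) : H →L[ℂ] H).comp (U : H →L[ℂ] H) = 1 := by
        rw [← ContinuousLinearMap.mul_def, ← Units.val_mul, inv_mul_cancel, Units.val_one]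
      calc ((U⁻¹ : (H →L[ℂ] H)ˣ) : H →L[ℂ] H) ((U : H →L[ℂ] H) (u (φ n)))
          = (((U⁻¹ : (H →L[ℂ] H)ˣ) : H →L[ℂ] H).comp (U : H →L[ℂ] H)) (u (φ n)) := rfl
        _ = u (φ n) := by rw [this]; rfl
    rwa [Function.comp_def, this] at hcont
  -- x is a unit vector
  have hxnorm : ‖x‖ = 1 := by
    have h1 : Filter.Tendsto (fun n => ‖u (φ n)‖) Filter.atTop (nhds ‖x‖) :=
      (continuous_norm.tendsto x).comp hux
    have h2 : Filter.Tendsto (fun n => ‖u (φ n)‖) Filter.atTop (nhds 1) := by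
      simp only [hu1]; exact tendsto_const_nhds
    exact tendsto_nhds_unique h1 h2
  have hx0 : x ≠ 0 := by
    intro h
    rw [h, norm_zero] at hxnorm
    norm_num at hxnorm
  -- T x = l • x
  have hTx : T x = l • x := by
    have h1 : Filter.Tendsto (fun n => (T - l • 1) (u (φ n))) Filter.atTop
        (nhds ((T - l • 1) x)) := ((T - l • 1).continuous.tendsto x).comp hux
    have h2 : Filter.Tendsto (fun n => (T - l • 1) (u (φ n))) Filter.atTop (nhds 0) :=
      heps.comp hφ.tendsto_atTop
    have h3 : (T - l • 1) x = 0 := tendsto_nhds_unique h1 h2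
    have : T x - l • x = 0 := by simpa [sub_apply, smul_apply, one_apply] using h3
    exact sub_eq_zero.mp this
  -- iterate: (T^n) x = l^n • x
  have hpow : ∀ n : ℕ, (T ^ n) x = l ^ n • x := by
    intro n
    induction n with
    | zero => simp
    | succ n ih =>
      rw [pow_succ, ContinuousLinearMap.mul_apply, hTx, map_smul, ih, smul_smul,
        ← pow_succ']
  -- contradiction with C_1.
  have hinf := hC1 x hx0
  have hle : ∀ n : ℕ, (⨅ n : ℕ, ‖(T ^ n) x‖) ≤ ‖l‖ ^ n := by
    intro n
    have : (⨅ n : ℕ, ‖(T ^ n) x‖) ≤ ‖(T ^ n) x‖ :=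
      ciInf_le ⟨0, fun r ⟨m, hm⟩ => hm ▸ norm_nonneg _⟩ n
    rwa [hpow n, norm_smul, hxnorm, mul_one, norm_pow] at this
  obtain ⟨n, hn⟩ := exists_pow_lt_of_lt_one hinf hl
  exact absurd (hle n) (not_le.mpr hn)
end

section
/- Let T be a contraction of class C_{11} (both T and T* are of class C_{1·}) such that I - T*T is compact. Then the spectrum of T is contained in the unit circle. -/
open ContinuousLinearMap Metric Filter Topology

lemma no_small_eigenvalue {H : Type*} [NormedAddCommGroup H]
    [InnerProductSpace ℂ H] (A : H →L[ℂ] H)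
    (hC1 : ∀ x : H, x ≠ 0 → 0 < ⨅ n : ℕ, ‖(A ^ n) x‖)
    {z : ℂ} (hz : ‖z‖ < 1) {x : H} (hx : A x = z • x) : x = 0 := by
  by_contra hx0
  have hpow : ∀ n : ℕ, (A ^ n) x = z ^ n • x := by
    intro n
    induction n with
    | zero => simp
    | succ n ih =>
      rw [pow_succ, ContinuousLinearMap.mul_apply, hx, map_smul, ih, smul_smul, pow_succ, mul_comm]
  have hinf := hC1 x hx0
  have hxpos : 0 < ‖x‖ := norm_pos_iff.mpr hx0
  obtain ⟨n, hn⟩ : ∃ n : ℕ, ‖z‖ ^ n < (⨅ n : ℕ, ‖(A ^ n) x‖) / ‖x‖ :=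
    exists_pow_lt_of_lt_one (div_pos hinf hxpos) hz
  have hle : (⨅ n : ℕ, ‖(A ^ n) x‖) ≤ ‖(A ^ n) x‖ :=
    ciInf_le ⟨0, fun r hr => by obtain ⟨m, rfl⟩ := hr; positivity⟩ n
  rw [hpow n, norm_smul, norm_pow] at hle
  rw [lt_div_iff₀ hxpos] at hn
  exact absurd (hle.trans_lt hn) (lt_irrefl _)

/-- Let `T` be a contraction of class `C_{11}` (both `T` and `T*` are of class
`C_{1·}`, i.e. `inf_n ‖Tⁿ x‖ > 0` for every `x ≠ 0`, and similarly for `T*`) such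
that `I - T*T` is compact. Then the spectrum of `T` is contained in the unit
circle. -/
theorem spectrum_subset_circle_of_C11_compact {H : Type*} [NormedAddCommGroup H]
    [InnerProductSpace ℂ H] [CompleteSpace H] (T : H →L[ℂ] H) (hT : ‖T‖ ≤ 1)
    (hC1 : ∀ x : H, x ≠ 0 → 0 < ⨅ n : ℕ, ‖(T ^ n) x‖)
    (hC1star : ∀ x : H, x ≠ 0 → 0 < ⨅ n : ℕ, ‖((adjoint T) ^ n) x‖)
    (hcpt : IsCompactOperator (⇑((1 : H →L[ℂ] H) - (adjoint T).comp T))) :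
    spectrum ℂ T ⊆ {z : ℂ | ‖z‖ = 1} := by
  intro z hz
  have hzle : ‖z‖ ≤ 1 := by
    have h := spectrum.norm_le_norm_mul_of_mem hz
    have h1 : ‖(1 : H →L[ℂ] H)‖ ≤ 1 := ContinuousLinearMap.norm_id_le
    calc ‖z‖ ≤ ‖T‖ * ‖(1 : H →L[ℂ] H)‖ := h
      _ ≤ 1 * 1 := mul_le_mul hT h1 (norm_nonneg _) zero_le_one
      _ = 1 := one_mul 1
  by_contra hne
  have hzlt : ‖z‖ < 1 := lt_of_le_of_ne hzle hne
  set A : H →L[ℂ] H := T - z • 1 with hA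
  have hAapply : ∀ x : H, A x = T x - z • x := by
    intro x; simp [hA]
  have hTstar : ‖adjoint T‖ ≤ 1 := by
    rw [LinearIsometryEquiv.norm_map adjoint T] at *
    exact hT
  -- injectivity of A
  have hinj : ∀ x : H, A x = 0 → x = 0 := by
    intro x hx
    refine no_small_eigenvalue T hC1 hzlt (x := x) ?_
    rw [hAapply, sub_eq_zero] at hx
    exact hx
  -- notation
  set Kop : H →L[ℂ] H := (1 : H →L[ℂ] H) - (adjoint T).comp T with hKop
  have hnormzT : ‖z • adjoint T‖ < 1 := by
    calc ‖z • adjoint T‖ = ‖z‖ * ‖adjoint T‖ := norm_smul _ _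
      _ ≤ ‖z‖ * 1 := by
          exact mul_le_mul_of_nonneg_left hTstar (norm_nonneg _)
      _ < 1 := by rwa [mul_one]
  set S : (H →L[ℂ] H)ˣ := Units.oneSub (z • adjoint T) hnormzT with hS
  set B : H →L[ℂ] H := ↑S⁻¹ with hB
  have key : ∀ x : H, x = B (Kop x) + B ((adjoint T) (A x)) := by
    intro x
    have h1 : Kop x + (adjoint T) (A x) = (↑S : H →L[ℂ] H) x := by
      have hScoe : (↑S : H →L[ℂ] H) = 1 - z • adjoint T := rfl
      rw [hScoe]
      simp only [hKop, hAapply, map_sub, map_smul, ContinuousLinearMap.sub_apply,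
        ContinuousLinearMap.smul_apply, ContinuousLinearMap.one_apply,
        ContinuousLinearMap.comp_apply]
      abel
    have h2 : B ((↑S : H →L[ℂ] H) x) = x := by
      have h3 : (↑S⁻¹ * ↑S : H →L[ℂ] H) = 1 := S.inv_mul
      calc B ((↑S : H →L[ℂ] H) x) = (↑S⁻¹ * ↑S : H →L[ℂ] H) x := rfl
        _ = x := by rw [h3]; rfl
    rw [← map_add, h1, h2]
  -- bounded below
  have hbdd : ∃ c : ℝ, 0 < c ∧ ∀ x : H, c * ‖x‖ ≤ ‖A x‖ := by
    by_contra hno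
    push_neg at hno
    choose f hf using fun n : ℕ => hno (1 / (n + 1)) (by positivity)
    have hfne : ∀ n, f n ≠ 0 := by
      intro n hfn
      have := hf n
      rw [hfn] at this
      simp at this
    set u : ℕ → H := fun n => ‖f n‖⁻¹ • f n with hu
    have hu1 : ∀ n, ‖u n‖ = 1 := by
      intro n
      rw [hu]
      simp [norm_smul, inv_mul_cancel₀ (norm_ne_zero_iff.mpr (hfne n))]
    have huA : ∀ n : ℕ, ‖A (u n)‖ ≤ 1 / (n + 1) := by
      intro n
      have hfn : (0:ℝ) < ‖f n‖ := norm_pos_iff.mpr (hfne n)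
      have : A (u n) = ‖f n‖⁻¹ • A (f n) := by rw [hu]; simp
      rw [this, norm_smul, norm_inv, norm_norm]
      rw [inv_mul_le_iff₀ hfn, mul_comm]
      exact ((hf n).le)
    -- compactness
    have hC : IsCompactOperator ⇑((B.comp Kop).toLinearMap) :=
      hcpt.continuous_comp B.continuous
    obtain ⟨Kset, hKsetc, hKsub⟩ := hC.image_closedBall_subset_compact 1
    have hmem : ∀ n : ℕ, B (Kop (u n)) ∈ Kset := by
      intro n
      exact hKsub ⟨u n, by simp [mem_closedBall, hu1 n], rfl⟩
    obtain ⟨w, hw, φ, hφ, hconv⟩ := hKsetc.tendsto_subseq hmem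
    have hA0 : Tendsto (fun n => A (u (φ n))) atTop (𝓝 0) := by
      refine squeeze_zero_norm (a := fun n : ℕ => 1 / (n + 1)) ?_
        tendsto_one_div_add_atTop_nhds_zero_nat
      intro n
      refine (huA (φ n)).trans ?_
      have hle : (n : ℝ) + 1 ≤ (φ n : ℝ) + 1 := by
        have h : n ≤ φ n := hφ.le_apply
        have : (n : ℝ) ≤ (φ n : ℝ) := by exact_mod_cast h
        linarith
      exact one_div_le_one_div_of_le (by positivity) hle
    have huconv : Tendsto (fun n => u (φ n)) atTop (𝓝 w) := by
      have h2 : Tendsto (fun n => B ((adjoint T) (A (u (φ n))))) atTop (𝓝 0) := by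
        have hc : Continuous fun y : H => B ((adjoint T) y) :=
          B.continuous.comp (ContinuousLinearMap.continuous _)
        have := (hc.tendsto 0).comp hA0
        simpa [Function.comp_def] using this
      have h3 := hconv.add h2
      rw [add_zero] at h3
      refine h3.congr ?_
      intro n
      exact (key (u (φ n))).symm
    have hwn : ‖w‖ = 1 := by
      have h4 : Tendsto (fun n => ‖u (φ n)‖) atTop (𝓝 ‖w‖) := huconv.norm
      have h5 : Tendsto (fun _ : ℕ => (1:ℝ)) atTop (𝓝 1) := tendsto_const_nhds
      exact tendsto_nhds_unique (h4.congr fun n => hu1 (φ n)) h5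
    have hAw : A w = 0 := by
      have h6 : Tendsto (fun n => A (u (φ n))) atTop (𝓝 (A w)) :=
        (A.continuous.tendsto w).comp huconv
      exact tendsto_nhds_unique h6 hA0
    have := hinj w hAw
    rw [this] at hwn
    simp at hwn
  obtain ⟨c, hc, hcb⟩ := hbdd
  -- closed range
  have hanti : AntilipschitzWith (⟨c, hc.le⟩ : NNReal)⁻¹ ⇑A := by
    apply A.antilipschitz_of_bound
    intro x
    rw [show (((⟨c, hc.le⟩ : NNReal)⁻¹ : NNReal) : ℝ) = c⁻¹ from rfl, inv_mul_eq_div, le_div_iff₀ hc]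
    have := hcb x
    linarith
  have hclosed : IsClosed (Set.range ⇑A) :=
    hanti.isClosed_range A.uniformContinuous
  -- dense range via the adjoint
  have horth : (LinearMap.range (A : H →ₗ[ℂ] H))ᗮ = ⊥ := by
    rw [Submodule.eq_bot_iff]
    intro x hxmem
    have h0 : ∀ y : H, (inner ℂ (A y) x : ℂ) = 0 := by
      intro y
      exact hxmem (A y) ⟨y, rfl⟩
    have h1 : ∀ y : H, (inner ℂ y ((adjoint T) x - (starRingEnd ℂ z) • x) : ℂ) = 0 := by
      intro y
      have h2 := h0 y
      rw [hAapply, inner_sub_left, inner_smul_left] at h2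
      rw [inner_sub_right, inner_smul_right, ContinuousLinearMap.adjoint_inner_right]
      linear_combination h2
    have h3 := h1 ((adjoint T) x - (starRingEnd ℂ z) • x)
    rw [inner_self_eq_zero, sub_eq_zero] at h3
    exact no_small_eigenvalue (adjoint T) hC1star (by simpa using hzlt) h3
  have hrange : LinearMap.range (A : H →ₗ[ℂ] H) = ⊤ := by
    have h1 : (LinearMap.range (A : H →ₗ[ℂ] H)).topologicalClosure = ⊤ := by
      rw [← Submodule.orthogonal_orthogonal_eq_closure, horth,
        Submodule.bot_orthogonal_eq_top]
    have h2 : IsClosed ((LinearMap.range (A : H →ₗ[ℂ] H) : Submodule ℂ H) : Set H) := by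
      rw [LinearMap.coe_range]
      exact hclosed
    rwa [IsClosed.submodule_topologicalClosure_eq h2] at h1
  have hker : LinearMap.ker (A : H →ₗ[ℂ] H) = ⊥ := by
    rw [Submodule.eq_bot_iff]
    intro x hx
    exact hinj x hx
  set e := ContinuousLinearEquiv.ofBijective A hker hrange with he
  have hunit : IsUnit A := by
    refine ⟨⟨A, (e.symm : H →L[ℂ] H), ?_, ?_⟩, rfl⟩
    · ext x
      have h1 : A ((e.symm : H →L[ℂ] H) x) = e (e.symm x) := by
        rw [← ContinuousLinearEquiv.coeFn_ofBijective A hker hrange]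
        rfl
      rw [ContinuousLinearMap.mul_apply, ContinuousLinearMap.one_apply, h1,
        e.apply_symm_apply]
    · ext x
      have h1 : (e.symm : H →L[ℂ] H) (A x) = e.symm (e x) := by
        rw [← ContinuousLinearEquiv.coeFn_ofBijective A hker hrange]
        rfl
      rw [ContinuousLinearMap.mul_apply, ContinuousLinearMap.one_apply, h1,
        e.symm_apply_apply]
  have hmem := spectrum.mem_iff.mp hz
  apply hmem
  have heq : algebraMap ℂ (H →L[ℂ] H) z - T = -A := by
    rw [hA, Algebra.algebraMap_eq_smul_one]
    abel
  rw [heq]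
  exact hunit.neg
end
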